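/- For m a nonzero integer, x(t) = −1/t and y(t) = −t^{m−1}/(t^m − 1) satisfy the system x' = x², y' = y(my − (m−1)x), and x^m · y/(x − y) is a first integral of this system. -/

import Mathlib

theorem rational_solution_and_first_integral (m : ℤ) (hm : m ≠ 0) :
    (∀ t : ℂ, t ≠ 0 → t ^ m ≠ 1 →
      HasDerivAt (fun s : ℂ => -1 / s) ((-1 / t) ^ 2) t ∧
      HasDerivAt (fun s : ℂ => -s ^ (m - 1) / (s ^ m - 1))
        ((-t ^ (m - 1) / (t ^ m - 1)) *
          ((m : ℂ) * (-t ^ (m - 1) / (t ^ m - 1)) - ((m : ℂ) - 1) * (-1 / t))) t) ∧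
    (∀ (x y : ℂ → ℂ) (t : ℂ), x t ≠ 0 → x t ≠ y t →
      HasDerivAt x ((x t) ^ 2) t →
      HasDerivAt y (y t * ((m : ℂ) * y t - ((m : ℂ) - 1) * x t)) t →
      HasDerivAt (fun s => (x s) ^ m * y s / (x s - y s)) 0 t) := by
  constructor
  · intro t ht htm
    have hden : t ^ m - 1 ≠ 0 := sub_ne_zero.mpr htm
    constructor
    · have h := ((hasDerivAt_id t).inv ht).const_mul (-1 : ℂ)
      have h' : HasDerivAt (fun s : ℂ => -1 / s) (-1 * -(t ^ 2)⁻¹) t := by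
        simpa [div_eq_mul_inv] using h
      convert h' using 1
      field_simp
    · have hnum : HasDerivAt (fun s : ℂ => -s ^ (m - 1))
          (-(((m : ℂ) - 1) * t ^ (m - 1 - 1))) t := by
        have := (hasDerivAt_zpow (m - 1) t (Or.inl ht)).fun_neg
        simpa using this
      have hden' : HasDerivAt (fun s : ℂ => s ^ m - 1)
          ((m : ℂ) * t ^ (m - 1)) t := by
        simpa using (hasDerivAt_zpow m t (Or.inl ht)).sub_const 1
      have h := hnum.div hden' hden
      refine h.congr_deriv ?_
      have e1 : t ^ (m - 1) = t ^ m / t := by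
        rw [zpow_sub₀ ht, zpow_one]
      have e2 : t ^ (m - 1 - 1) = t ^ m / t / t := by
        rw [zpow_sub₀ ht, zpow_sub₀ ht, zpow_one]
      rw [e1, e2]
      field_simp
      ring
  · intro x y t hx0 hxy hx hy
    have hsub : x t - y t ≠ 0 := sub_ne_zero.mpr hxy
    have hxm : HasDerivAt (fun s => (x s) ^ m)
        ((m : ℂ) * (x t) ^ (m - 1) * (x t) ^ 2) t :=
      (hasDerivAt_zpow m (x t) (Or.inl hx0)).comp t hx
    have hnum : HasDerivAt (fun s => (x s) ^ m * y s)
        ((m : ℂ) * (x t) ^ (m - 1) * (x t) ^ 2 * y t +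
          (x t) ^ m * (y t * ((m : ℂ) * y t - ((m : ℂ) - 1) * x t))) t :=
      hxm.mul hy
    have hden : HasDerivAt (fun s => x s - y s)
        ((x t) ^ 2 - y t * ((m : ℂ) * y t - ((m : ℂ) - 1) * x t)) t := hx.sub hy
    have h := hnum.div hden hsub
    refine h.congr_deriv ?_
    have e1 : (x t) ^ (m - 1) = (x t) ^ m / x t := by
      rw [zpow_sub₀ hx0, zpow_one]
    rw [e1]
    field_simp
    ring
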